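/- Let y be a grid state and let a and b be functions to ℕ on the index sets of A(·) and B(·). If the triple (a,b,y) is neither A-plausible nor B-plausible, and D ∈ 𝒟⁺(x,y) is a positive domain with A(D) = a and B(D) = b, then y ≼ x. -/
import Mathlib


/-! Grid diagram combinatorics: the complex of positive domains `CD₊`. -/

/-- A domain on the `n × n` toroidal grid from grid state `x` to grid state `y`,
avoiding the distinguished top-right square. -/
def IsGridDomain (n : ℕ) (x y : Equiv.Perm (ZMod n)) (D : ZMod n → ZMod n → ℤ) : Prop :=
  D ((n : ZMod n) - 1) ((n : ZMod n) - 1) = 0 ∧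
    ∀ i j : ZMod n,
      D i j - D (i - 1) j - D i (j - 1) + D (i - 1) (j - 1) =
        (if x i = j then 1 else 0) - (if y i = j then 1 else 0)

/-- A positive domain from `x` to `y`. -/
def IsGridPosDomain (n : ℕ) (x y : Equiv.Perm (ZMod n)) (D : ZMod n → ZMod n → ℤ) : Prop :=
  IsGridDomain n x y D ∧ ∀ i j : ZMod n, 0 ≤ D i j

/-- Membership in the cyclic interval `[a, b)` of `ZMod n`. -/
def cycInt (n : ℕ) (a b i : ZMod n) : Prop :=
  ∃ k : ℕ, k < (b - a).val ∧ i = a + (k : ZMod n)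

/-- A rectangle from `x` to `y`. -/
def IsGridRect (n : ℕ) (x y : Equiv.Perm (ZMod n)) (R : ZMod n → ZMod n → ℤ) : Prop :=
  IsGridPosDomain n x y R ∧
    ∃ i₁ i₂ : ZMod n, i₁ ≠ i₂ ∧
      y = x * Equiv.swap i₁ i₂ ∧
      (∀ i j : ZMod n,
        (cycInt n i₁ i₂ i ∧ cycInt n (x i₁) (x i₂) j → R i j = 1) ∧
        (¬(cycInt n i₁ i₂ i ∧ cycInt n (x i₁) (x i₂) j) → R i j = 0)) ∧
      ∀ i : ZMod n, i ≠ i₁ → i ≠ i₂ → cycInt n i₁ i₂ i → ¬ cycInt n (x i₁) (x i₂) (x i)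

/-- The horizontal annulus through row `j`. -/
def annH (n : ℕ) (j : ZMod n) : ZMod n → ZMod n → ℤ := fun _ j' => if j' = j then 1 else 0

/-- The vertical annulus through column `i`. -/
def annV (n : ℕ) (i : ZMod n) : ZMod n → ZMod n → ℤ := fun i' _ => if i' = i then 1 else 0

/-- `A(D)`: multiplicities of `D` in the rightmost column. -/
def colA (n : ℕ) (D : ZMod n → ZMod n → ℤ) : {j : ZMod n // j ≠ (n : ZMod n) - 1} → ℤ :=
  fun j => D ((n : ZMod n) - 1) j.1

/-- `B(D)`: multiplicities of `D` in the topmost row. -/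
def rowB (n : ℕ) (D : ZMod n → ZMod n → ℤ) : {i : ZMod n // i ≠ (n : ZMod n) - 1} → ℤ :=
  fun i => D i.1 ((n : ZMod n) - 1)

/-- The partial order on grid states: `y ≼ x` iff there is a positive domain from `x` to `y`
avoiding the rightmost column and the topmost row. -/
def gridLE (n : ℕ) (y x : Equiv.Perm (ZMod n)) : Prop :=
  ∃ D : ZMod n → ZMod n → ℤ, IsGridPosDomain n x y D ∧ colA n D = 0 ∧ rowB n D = 0

/-- `(a, b, y)` is A-plausible: there is a rectangle `R` ending at `y` with
`0 < A(R) ≤ a`. -/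
def APlausible (n : ℕ) (a : {j : ZMod n // j ≠ (n : ZMod n) - 1} → ℕ)
    (y : Equiv.Perm (ZMod n)) : Prop :=
  ∃ (z : Equiv.Perm (ZMod n)) (R : ZMod n → ZMod n → ℤ),
    IsGridRect n z y R ∧ colA n R ≠ 0 ∧ ∀ j, colA n R j ≤ (a j : ℤ)

/-- `(a, b, y)` is B-plausible: there is a rectangle `R` ending at `y` with
`0 < B(R) ≤ b`. -/
def BPlausible (n : ℕ) (b : {i : ZMod n // i ≠ (n : ZMod n) - 1} → ℕ)
    (y : Equiv.Perm (ZMod n)) : Prop :=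
  ∃ (z : Equiv.Perm (ZMod n)) (R : ZMod n → ZMod n → ℤ),
    IsGridRect n z y R ∧ rowB n R ≠ 0 ∧ ∀ i, rowB n R i ≤ (b i : ℤ)


/-! ### Auxiliary lemmas -/

lemma gd_m_eq (n : ℕ) : ((n : ZMod n) - 1) = (-1 : ZMod n) := by
  rw [ZMod.natCast_self]; ring

lemma gd_castval {n : ℕ} [NeZero n] (a : ZMod n) : ((a.val : ℕ) : ZMod n) = a :=
  ZMod.natCast_rightInverse a

lemma gd_val_inj {n : ℕ} [NeZero n] {a b : ZMod n} (h : a.val = b.val) : a = b := by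
  rw [← gd_castval a, ← gd_castval b, h]

lemma gd_val_neg_one {n : ℕ} [NeZero n] : ((-1 : ZMod n)).val = n - 1 := by
  rcases n with _ | k
  · exact absurd rfl (NeZero.ne 0)
  · simpa using ZMod.val_neg_one k

lemma gd_cast_pred {n : ℕ} [NeZero n] : (((n - 1 : ℕ)) : ZMod n) = (-1 : ZMod n) := by
  have h1 : 1 ≤ n := Nat.one_le_iff_ne_zero.2 (NeZero.ne n)
  have h2 : (((n - 1 : ℕ)) : ZMod n) + 1 = (((n - 1) + 1 : ℕ) : ZMod n) := by push_cast; ring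
  rw [Nat.sub_add_cancel h1, ZMod.natCast_self] at h2
  linear_combination h2

lemma gd_cycInt_iff {n : ℕ} [NeZero n] (a b i : ZMod n) :
    cycInt n a b i ↔ (i - a).val < (b - a).val := by
  constructor
  · rintro ⟨k, hk, rfl⟩
    have hkn : k < n := lt_trans hk (ZMod.val_lt _)
    simpa [ZMod.val_cast_of_lt hkn] using hk
  · intro h
    exact ⟨(i - a).val, h, by rw [gd_castval]; ring⟩

lemma gd_val_sub_of_lt {n : ℕ} [NeZero n] {a b : ZMod n} (h : a.val < b.val) :
    (a - b).val = n + a.val - b.val := by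
  have hb : b.val < n := ZMod.val_lt b
  have heq : a - b = (((n + a.val - b.val : ℕ)) : ZMod n) := by
    have h2 : ((n + a.val - b.val : ℕ) : ZMod n)
        = ((n + a.val : ℕ) : ZMod n) - ((b.val : ℕ) : ZMod n) := by
      rw [← Nat.cast_sub (by omega)]
    rw [h2]
    push_cast
    rw [ZMod.natCast_self, gd_castval, gd_castval]
    ring
  rw [heq, ZMod.val_cast_of_lt (by omega)]

lemma gd_val_sub_of_le {n : ℕ} [NeZero n] {a b : ZMod n} (h : b.val ≤ a.val) :
    (a - b).val = a.val - b.val := by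
  have heq : a - b = (((a.val - b.val : ℕ)) : ZMod n) := by
    have h2 : ((a.val - b.val : ℕ) : ZMod n) = ((a.val : ℕ) : ZMod n) - ((b.val : ℕ) : ZMod n) := by
      rw [← Nat.cast_sub h]
    rw [h2, gd_castval, gd_castval]
  rw [heq, ZMod.val_cast_of_lt (by have := ZMod.val_lt a; omega)]

lemma gd_val_one {n : ℕ} (hn : 2 ≤ n) : (1 : ZMod n).val = 1 := by
  rw [← Nat.cast_one, ZMod.val_cast_of_lt (by omega)]

lemma gd_val_sub_one {n : ℕ} [NeZero n] (c : ZMod n) :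
    (c - 1).val = if c = 0 then n - 1 else c.val - 1 := by
  split_ifs with h
  · subst h; simpa using gd_val_neg_one
  · have h1 : 1 ≤ c.val := by
      rw [Nat.one_le_iff_ne_zero]
      exact fun e => h ((ZMod.val_eq_zero c).1 e)
    have hn2 : 2 ≤ n := by have := ZMod.val_lt c; omega
    have h2 := gd_val_sub_of_le (a := c) (b := 1) (by rw [gd_val_one hn2]; omega)
    rw [gd_val_one hn2] at h2
    exact h2

/-- Boundary behaviour of indicator of a cyclic interval. -/
lemma gd_cycInt_step {n : ℕ} [NeZero n] {a b : ZMod n} (hab : a ≠ b) (i : ZMod n)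
    [Decidable (cycInt n a b i)] [Decidable (cycInt n a b (i - 1))] :
    ((if cycInt n a b i then 1 else 0) - (if cycInt n a b (i - 1) then 1 else 0) : ℤ)
      = (if i = a then 1 else 0) - (if i = b then 1 else 0) := by
  have hd0 : 0 < (b - a).val := by
    have h1 : b - a ≠ 0 := sub_ne_zero.2 (Ne.symm hab)
    have h2 : ¬ (b - a).val = 0 := fun e => h1 ((ZMod.val_eq_zero _).1 e)
    omega
  have hdn : (b - a).val < n := ZMod.val_lt _
  have hun : (i - a).val < n := ZMod.val_lt _
  have hia : (i = a) ↔ (i - a).val = 0 := by rw [ZMod.val_eq_zero, sub_eq_zero]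
  have hib : (i = b) ↔ (i - a).val = (b - a).val := by
    constructor
    · rintro rfl; rfl
    · intro e; have := gd_val_inj e; rwa [sub_left_inj] at this
  have hi0 : (i - a = 0) ↔ (i - a).val = 0 := by rw [ZMod.val_eq_zero]
  have hsub : (i - 1 - a) = (i - a) - 1 := by ring
  simp only [gd_cycInt_iff, hsub, gd_val_sub_one, hia, hib, hi0]
  split_ifs <;> omega

lemma gd_cycInt_singleton {n : ℕ} (hn : 2 ≤ n) (a i : ZMod n) :
    cycInt n a (a + 1) i ↔ i = a := by
  haveI : NeZero n := ⟨by omega⟩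
  rw [gd_cycInt_iff, add_sub_cancel_left, gd_val_one hn, Nat.lt_one_iff,
    ZMod.val_eq_zero, sub_eq_zero]

lemma gd_ite_comm {α : Type*} [DecidableEq α] (u v : α) :
    (if u = v then (1 : ℤ) else 0) = (if v = u then 1 else 0) := by
  by_cases h : u = v
  · simp [h]
  · simp [h, Ne.symm h]

lemma gd_ite_and {P Q : Prop} [Decidable P] [Decidable Q] :
    (if P ∧ Q then (1 : ℤ) else 0) = (if P then 1 else 0) * (if Q then 1 else 0) := by
  by_cases hp : P <;> by_cases hq : Q <;> simp [hp, hq]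

/-- Construction of a single-row rectangle ending at `y`, crossing the rightmost column. -/
lemma gd_exists_rect_A (n : ℕ) (hn : 2 ≤ n) (y : Equiv.Perm (ZMod n)) (t : ℕ)
    (ht : t + 1 ≤ n - 1)
    (hlt : (y.symm ((t : ℕ) : ZMod n)).val < (y.symm (((t + 1 : ℕ)) : ZMod n)).val) :
    ∃ z R, IsGridRect n z y R ∧
      ∀ j : ZMod n, R (-1) j = if j = ((t : ℕ) : ZMod n) then 1 else 0 := by
  haveI : NeZero n := ⟨by omega⟩
  classical
  set jt : ZMod n := ((t : ℕ) : ZMod n) with hjt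
  have hjt1 : (((t + 1 : ℕ)) : ZMod n) = jt + 1 := by push_cast; ring
  rw [hjt1] at hlt
  have hone : (1 : ZMod n) ≠ 0 := fun h2 => by
    have h3 := gd_val_one hn
    rw [h2, ZMod.val_zero] at h3
    omega
  set i₁ := y.symm (jt + 1) with hi₁
  set i₂ := y.symm jt with hi₂
  have hne : i₁ ≠ i₂ := fun h => by
    have := y.symm.injective h
    exact hone (by linear_combination this)
  have hjne : jt ≠ jt + 1 := fun h => hone (by linear_combination h.symm)
  set z := y * Equiv.swap i₁ i₂ with hz
  have hz1 : z i₁ = jt := by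
    rw [hz]; simp [Equiv.swap_apply_left, hi₂]
  have hz2 : z i₂ = jt + 1 := by
    rw [hz]; simp [Equiv.swap_apply_right, hi₁]
  have hy1 : y i₁ = jt + 1 := y.apply_symm_apply _
  have hy2 : y i₂ = jt := y.apply_symm_apply _
  set R : ZMod n → ZMod n → ℤ :=
    fun i j => if cycInt n i₁ i₂ i ∧ cycInt n jt (jt + 1) j then 1 else 0 with hR
  have hRval : ∀ i j : ZMod n,
      R i j = (if cycInt n i₁ i₂ i then (1 : ℤ) else 0)
        * (if cycInt n jt (jt + 1) j then 1 else 0) := by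
    intro i j
    show (if cycInt n i₁ i₂ i ∧ cycInt n jt (jt + 1) j then (1 : ℤ) else 0) = _
    exact gd_ite_and
  -- -1 is in the column interval
  have hval12 : (i₂ - i₁).val = n + i₂.val - i₁.val := gd_val_sub_of_lt hlt
  have hmem : cycInt n i₁ i₂ (-1) := by
    have h1 : i₁.val < n := ZMod.val_lt _
    rw [gd_cycInt_iff, hval12, gd_val_sub_of_le (by rw [gd_val_neg_one]; omega),
      gd_val_neg_one]
    omega
  -- jt is not -1
  have hjtval : jt.val = t := ZMod.val_cast_of_lt (by omega)
  have hjtm : jt ≠ -1 := fun h => by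
    rw [h, gd_val_neg_one] at hjtval; omega
  have hRm : ∀ j : ZMod n, R (-1) j = if j = jt then 1 else 0 := by
    intro j
    show (if cycInt n i₁ i₂ (-1) ∧ cycInt n jt (jt + 1) j then (1 : ℤ) else 0) = _
    by_cases hj : j = jt
    · rw [if_pos ⟨hmem, (gd_cycInt_singleton hn jt j).2 hj⟩, if_pos hj]
    · rw [if_neg (fun hc => hj ((gd_cycInt_singleton hn jt j).1 hc.2)), if_neg hj]
  refine ⟨z, R, ⟨⟨⟨?_, ?_⟩, ?_⟩, i₁, i₂, hne, ?_, ?_, ?_⟩, hRm⟩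
  · -- R m m = 0
    rw [gd_m_eq, hRm, if_neg (fun h => hjtm h.symm)]
  · -- corner relation
    intro i j
    have hstepP := gd_cycInt_step hne i
    have hstepQ := gd_cycInt_step hjne j
    have hprod : R i j - R (i - 1) j - R i (j - 1) + R (i - 1) (j - 1)
        = ((if i = i₁ then (1 : ℤ) else 0) - (if i = i₂ then 1 else 0))
          * ((if j = jt then (1 : ℤ) else 0) - (if j = jt + 1 then 1 else 0)) := by
      rw [← hstepP, ← hstepQ, hRval, hRval, hRval, hRval]
      ring
    rw [hprod]
    by_cases h1 : i = i₁
    · subst h1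
      rw [if_pos rfl, if_neg hne, hz1, hy1, gd_ite_comm jt j, gd_ite_comm (jt + 1) j]
      ring
    · by_cases h2 : i = i₂
      · subst h2
        rw [if_pos rfl, if_neg h1, hz2, hy2, gd_ite_comm jt j, gd_ite_comm (jt + 1) j]
        ring
      · have hzi : z i = y i := by
          rw [hz]
          simp [Equiv.swap_apply_of_ne_of_ne h1 h2]
        rw [if_neg h1, if_neg h2, hzi]
        ring
  · -- positivity
    intro i j
    show (0 : ℤ) ≤ if cycInt n i₁ i₂ i ∧ cycInt n jt (jt + 1) j then 1 else 0
    split_ifs <;> norm_num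
  · -- y = z * swap
    rw [hz, mul_assoc, Equiv.swap_mul_self, mul_one]
  · -- characterization
    intro i j
    rw [hz1, hz2]
    constructor
    · intro hc
      show (if cycInt n i₁ i₂ i ∧ cycInt n jt (jt + 1) j then (1 : ℤ) else 0) = 1
      rw [if_pos hc]
    · intro hc
      show (if cycInt n i₁ i₂ i ∧ cycInt n jt (jt + 1) j then (1 : ℤ) else 0) = 0
      rw [if_neg hc]
  · -- emptiness
    intro i h1 h2 hP
    rw [hz1, hz2, gd_cycInt_singleton hn]
    intro hcon
    have hzi : z i = y i := by rw [hz]; simp [Equiv.swap_apply_of_ne_of_ne h1 h2]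
    rw [hzi] at hcon
    exact h2 (by rw [hi₂, ← hcon, Equiv.symm_apply_apply])

/-- Construction of a single-column rectangle ending at `y`, crossing the topmost row. -/
lemma gd_exists_rect_B (n : ℕ) (hn : 2 ≤ n) (y : Equiv.Perm (ZMod n)) (s : ℕ)
    (hs : s + 1 ≤ n - 1)
    (hlt : (y ((s : ℕ) : ZMod n)).val < (y (((s + 1 : ℕ)) : ZMod n)).val) :
    ∃ z R, IsGridRect n z y R ∧
      ∀ i : ZMod n, R i (-1) = if i = ((s : ℕ) : ZMod n) then 1 else 0 := by
  haveI : NeZero n := ⟨by omega⟩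
  classical
  set is : ZMod n := ((s : ℕ) : ZMod n) with his
  have his1 : (((s + 1 : ℕ)) : ZMod n) = is + 1 := by push_cast; ring
  rw [his1] at hlt
  have hone : (1 : ZMod n) ≠ 0 := fun h2 => by
    have h3 := gd_val_one hn
    rw [h2, ZMod.val_zero] at h3
    omega
  set i₁ := is with hi₁
  set i₂ := is + 1 with hi₂
  set j₁ := y i₂ with hj₁
  set j₂ := y i₁ with hj₂
  have hne : i₁ ≠ i₂ := fun h => hone (by linear_combination h.symm)
  have hjne : j₁ ≠ j₂ := fun h => hne (y.injective h).symm
  set z := y * Equiv.swap i₁ i₂ with hz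
  have hz1 : z i₁ = j₁ := by rw [hz]; simp [Equiv.swap_apply_left, hj₁]
  have hz2 : z i₂ = j₂ := by rw [hz]; simp [Equiv.swap_apply_right, hj₂]
  set R : ZMod n → ZMod n → ℤ :=
    fun i j => if cycInt n i₁ i₂ i ∧ cycInt n j₁ j₂ j then 1 else 0 with hR
  have hRval : ∀ i j : ZMod n,
      R i j = (if cycInt n i₁ i₂ i then (1 : ℤ) else 0)
        * (if cycInt n j₁ j₂ j then 1 else 0) := by
    intro i j
    show (if cycInt n i₁ i₂ i ∧ cycInt n j₁ j₂ j then (1 : ℤ) else 0) = _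
    exact gd_ite_and
  -- -1 is in the row interval
  have hval12 : (j₂ - j₁).val = n + j₂.val - j₁.val := gd_val_sub_of_lt hlt
  have hmem : cycInt n j₁ j₂ (-1) := by
    have h1 : j₁.val < n := ZMod.val_lt _
    rw [gd_cycInt_iff, hval12, gd_val_sub_of_le (by rw [gd_val_neg_one]; omega),
      gd_val_neg_one]
    omega
  -- is is not -1
  have hisval : is.val = s := ZMod.val_cast_of_lt (by omega)
  have hism : is ≠ -1 := fun h => by
    rw [h, gd_val_neg_one] at hisval; omega
  have hRm : ∀ i : ZMod n, R i (-1) = if i = is then 1 else 0 := by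
    intro i
    show (if cycInt n i₁ i₂ i ∧ cycInt n j₁ j₂ (-1) then (1 : ℤ) else 0) = _
    by_cases hi : i = is
    · rw [if_pos ⟨(gd_cycInt_singleton hn i₁ i).2 hi, hmem⟩, if_pos hi]
    · rw [if_neg (fun hc => hi ((gd_cycInt_singleton hn i₁ i).1 hc.1)), if_neg hi]
  refine ⟨z, R, ⟨⟨⟨?_, ?_⟩, ?_⟩, i₁, i₂, hne, ?_, ?_, ?_⟩, hRm⟩
  · -- R m m = 0
    rw [gd_m_eq, hRm, if_neg (fun h => hism h.symm)]
  · -- corner relation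
    intro i j
    have hstepP := gd_cycInt_step hne i
    have hstepQ := gd_cycInt_step hjne j
    have hprod : R i j - R (i - 1) j - R i (j - 1) + R (i - 1) (j - 1)
        = ((if i = i₁ then (1 : ℤ) else 0) - (if i = i₂ then 1 else 0))
          * ((if j = j₁ then (1 : ℤ) else 0) - (if j = j₂ then 1 else 0)) := by
      rw [← hstepP, ← hstepQ, hRval, hRval, hRval, hRval]
      ring
    rw [hprod]
    by_cases h1 : i = i₁
    · subst h1
      rw [if_pos rfl, if_neg hne, hz1, ← hj₂, gd_ite_comm j₁ j, gd_ite_comm j₂ j]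
      ring
    · by_cases h2 : i = i₂
      · subst h2
        rw [if_pos rfl, if_neg h1, hz2, ← hj₁, gd_ite_comm j₁ j, gd_ite_comm j₂ j]
        ring
      · have hzi : z i = y i := by
          rw [hz]
          simp [Equiv.swap_apply_of_ne_of_ne h1 h2]
        rw [if_neg h1, if_neg h2, hzi]
        ring
  · -- positivity
    intro i j
    show (0 : ℤ) ≤ if cycInt n i₁ i₂ i ∧ cycInt n j₁ j₂ j then 1 else 0
    split_ifs <;> norm_num
  · -- y = z * swap
    rw [hz, mul_assoc, Equiv.swap_mul_self, mul_one]
  · -- characterization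
    intro i j
    rw [hz1, hz2]
    constructor
    · intro hc
      show (if cycInt n i₁ i₂ i ∧ cycInt n j₁ j₂ j then (1 : ℤ) else 0) = 1
      rw [if_pos hc]
    · intro hc
      show (if cycInt n i₁ i₂ i ∧ cycInt n j₁ j₂ j then (1 : ℤ) else 0) = 0
      rw [if_neg hc]
  · -- emptiness
    intro i h1 h2 hP
    exact absurd ((gd_cycInt_singleton hn i₁ i).1 hP) h1

/-- Telescoped corner relation along a row segment starting at the cut. -/
lemma gd_T_row (n : ℕ) [NeZero n] (x y : Equiv.Perm (ZMod n)) (D : ZMod n → ZMod n → ℤ)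
    (hcorner : ∀ i j : ZMod n, D i j - D (i - 1) j - D i (j - 1) + D (i - 1) (j - 1)
      = (if x i = j then 1 else 0) - (if y i = j then 1 else 0))
    (j : ZMod n) :
    ∀ s : ℕ, s ≤ n - 1 →
      (D ((s : ℕ) : ZMod n) j - D (-1) j) - (D ((s : ℕ) : ZMod n) (j - 1) - D (-1) (j - 1))
        = (if (x.symm j).val ≤ s then 1 else 0) - (if (y.symm j).val ≤ s then 1 else 0) := by
  have hn1 : 1 ≤ n := Nat.one_le_iff_ne_zero.2 (NeZero.ne n)
  intro s
  induction s with
  | zero =>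
    intro _
    have hc := hcorner 0 j
    rw [zero_sub] at hc
    have hx : (x 0 = j) ↔ ((x.symm j).val ≤ 0) := by
      rw [Nat.le_zero, ZMod.val_eq_zero, x.apply_eq_iff_eq_symm_apply, eq_comm]
    have hy : (y 0 = j) ↔ ((y.symm j).val ≤ 0) := by
      rw [Nat.le_zero, ZMod.val_eq_zero, y.apply_eq_iff_eq_symm_apply, eq_comm]
    simp only [hx, hy] at hc
    rw [Nat.cast_zero]
    linarith [hc]
  | succ s ih =>
    intro hs
    have ihh := ih (by omega)
    have hc := hcorner ((s + 1 : ℕ) : ZMod n) j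
    have hcast : ((s + 1 : ℕ) : ZMod n) - 1 = ((s : ℕ) : ZMod n) := by push_cast; ring
    rw [hcast] at hc
    have hval : (((s + 1 : ℕ)) : ZMod n).val = s + 1 := ZMod.val_cast_of_lt (by omega)
    have hvx : (x ((s + 1 : ℕ) : ZMod n) = j) ↔ ((x.symm j).val = s + 1) := by
      rw [x.apply_eq_iff_eq_symm_apply, eq_comm]
      constructor
      · intro h; rw [h, hval]
      · intro h; exact gd_val_inj (by rw [h, hval])
    have hvy : (y ((s + 1 : ℕ) : ZMod n) = j) ↔ ((y.symm j).val = s + 1) := by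
      rw [y.apply_eq_iff_eq_symm_apply, eq_comm]
      constructor
      · intro h; rw [h, hval]
      · intro h; exact gd_val_inj (by rw [h, hval])
    simp only [hvx, hvy] at hc
    have hmx : (if (x.symm j).val ≤ s + 1 then (1 : ℤ) else 0)
        = (if (x.symm j).val ≤ s then 1 else 0) + (if (x.symm j).val = s + 1 then 1 else 0) := by
      split_ifs <;> omega
    have hmy : (if (y.symm j).val ≤ s + 1 then (1 : ℤ) else 0)
        = (if (y.symm j).val ≤ s then 1 else 0) + (if (y.symm j).val = s + 1 then 1 else 0) := by
      split_ifs <;> omega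
    rw [hmx, hmy]
    linarith [hc, ihh]

/-- Telescoped corner relation along a column segment starting at the cut. -/
lemma gd_T_col (n : ℕ) [NeZero n] (x y : Equiv.Perm (ZMod n)) (D : ZMod n → ZMod n → ℤ)
    (hcorner : ∀ i j : ZMod n, D i j - D (i - 1) j - D i (j - 1) + D (i - 1) (j - 1)
      = (if x i = j then 1 else 0) - (if y i = j then 1 else 0))
    (i : ZMod n) :
    ∀ t : ℕ, t ≤ n - 1 →
      (D i ((t : ℕ) : ZMod n) - D i (-1)) - (D (i - 1) ((t : ℕ) : ZMod n) - D (i - 1) (-1))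
        = (if (x i).val ≤ t then 1 else 0) - (if (y i).val ≤ t then 1 else 0) := by
  have hn1 : 1 ≤ n := Nat.one_le_iff_ne_zero.2 (NeZero.ne n)
  intro t
  induction t with
  | zero =>
    intro _
    have hc := hcorner i 0
    rw [zero_sub] at hc
    have hx : (x i = 0) ↔ ((x i).val ≤ 0) := by rw [Nat.le_zero, ZMod.val_eq_zero]
    have hy : (y i = 0) ↔ ((y i).val ≤ 0) := by rw [Nat.le_zero, ZMod.val_eq_zero]
    simp only [hx, hy] at hc
    rw [Nat.cast_zero]
    linarith [hc]
  | succ t ih =>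
    intro ht
    have ihh := ih (by omega)
    have hc := hcorner i ((t + 1 : ℕ) : ZMod n)
    have hcast : ((t + 1 : ℕ) : ZMod n) - 1 = ((t : ℕ) : ZMod n) := by push_cast; ring
    rw [hcast] at hc
    have hval : (((t + 1 : ℕ)) : ZMod n).val = t + 1 := ZMod.val_cast_of_lt (by omega)
    have hvx : (x i = ((t + 1 : ℕ) : ZMod n)) ↔ ((x i).val = t + 1) := by
      constructor
      · intro h; rw [h, hval]
      · intro h; exact gd_val_inj (by rw [h, hval])
    have hvy : (y i = ((t + 1 : ℕ) : ZMod n)) ↔ ((y i).val = t + 1) := by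
      constructor
      · intro h; rw [h, hval]
      · intro h; exact gd_val_inj (by rw [h, hval])
    simp only [hvx, hvy] at hc
    have hmx : (if (x i).val ≤ t + 1 then (1 : ℤ) else 0)
        = (if (x i).val ≤ t then 1 else 0) + (if (x i).val = t + 1 then 1 else 0) := by
      split_ifs <;> omega
    have hmy : (if (y i).val ≤ t + 1 then (1 : ℤ) else 0)
        = (if (y i).val ≤ t then 1 else 0) + (if (y i).val = t + 1 then 1 else 0) := by
      split_ifs <;> omega
    rw [hmx, hmy]
    linarith [hc, ihh]

/-- The key positivity estimate: if there are no ascents of `y` along positive entries of the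
cut row and column, then `D` dominates the corresponding sum of annuli. -/
lemma gd_key (n : ℕ) (hn : 2 ≤ n) (x y : Equiv.Perm (ZMod n)) (D : ZMod n → ZMod n → ℤ)
    (hcorner : ∀ i j : ZMod n, D i j - D (i - 1) j - D i (j - 1) + D (i - 1) (j - 1)
      = (if x i = j then 1 else 0) - (if y i = j then 1 else 0))
    (hm0 : D (-1) (-1) = 0) (hpos : ∀ i j, 0 ≤ D i j)
    (A0 : ∀ t : ℕ, t + 1 ≤ n - 1 → 0 < D (-1) ((t : ℕ) : ZMod n) →
      (y.symm (((t + 1 : ℕ)) : ZMod n)).val < (y.symm ((t : ℕ) : ZMod n)).val)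
    (B0 : ∀ s : ℕ, s + 1 ≤ n - 1 → 0 < D ((s : ℕ) : ZMod n) (-1) →
      (y (((s + 1 : ℕ)) : ZMod n)).val < (y ((s : ℕ) : ZMod n)).val) :
    ∀ i j : ZMod n, D (-1) j + D i (-1) ≤ D i j := by
  haveI : NeZero n := ⟨by omega⟩
  classical
  set V : ℕ × ℕ → ℤ := fun p =>
    D (-1) ((p.2 : ℕ) : ZMod n) + D ((p.1 : ℕ) : ZMod n) (-1)
      - D ((p.1 : ℕ) : ZMod n) ((p.2 : ℕ) : ZMod n) with hV
  by_contra hcon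
  push_neg at hcon
  obtain ⟨i0, j0, hbad⟩ := hcon
  set F : Finset (ℕ × ℕ) := Finset.range n ×ˢ Finset.range n with hF
  have hmemF : ∀ a b : ℕ, a < n → b < n → (a, b) ∈ F := by
    intro a b ha hb
    rw [hF, Finset.mem_product]
    exact ⟨Finset.mem_range.2 ha, Finset.mem_range.2 hb⟩
  have hp0F : (i0.val, j0.val) ∈ F := hmemF _ _ (ZMod.val_lt i0) (ZMod.val_lt j0)
  have hVp0 : 1 ≤ V (i0.val, j0.val) := by
    rw [hV]
    dsimp only
    rw [gd_castval, gd_castval]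
    omega
  have hne : ((F.image V)).Nonempty := ⟨V (i0.val, j0.val), Finset.mem_image_of_mem V hp0F⟩
  set M : ℤ := (F.image V).max' hne with hM
  have hMle : ∀ p ∈ F, V p ≤ M := fun p hp => Finset.le_max' _ _ (Finset.mem_image_of_mem V hp)
  have hM1 : 1 ≤ M := le_trans hVp0 (hMle _ hp0F)
  obtain ⟨p₁, hp₁F, hp₁⟩ := Finset.mem_image.1 ((F.image V).max'_mem hne)
  set T : Finset (ℕ × ℕ) := F.filter (fun p => V p = M) with hT
  have hTne : T.Nonempty := ⟨p₁, Finset.mem_filter.2 ⟨hp₁F, hp₁⟩⟩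
  obtain ⟨p, hpT, hpmin⟩ := T.exists_min_image (fun q => q.1 + q.2) hTne
  obtain ⟨hpF, hpM⟩ := Finset.mem_filter.1 hpT
  obtain ⟨s, t⟩ := p
  have hsn : s < n := Finset.mem_range.1 (Finset.mem_product.1 hpF).1
  have htn : t < n := Finset.mem_range.1 (Finset.mem_product.1 hpF).2
  -- boundary values of V
  have hVtop : ∀ s' : ℕ, V (s', n - 1) = 0 := by
    intro s'
    rw [hV]
    dsimp only
    rw [gd_cast_pred, hm0]
    ring
  have hVright : ∀ t' : ℕ, V (n - 1, t') = 0 := by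
    intro t'
    rw [hV]
    dsimp only
    rw [gd_cast_pred, hm0]
    ring
  have htne : t ≠ n - 1 := by
    intro h
    rw [h, hVtop] at hpM
    omega
  have hsne : s ≠ n - 1 := by
    intro h
    rw [h] at hpM
    rw [hVright] at hpM
    omega
  -- difference identities for V
  have hVrow : ∀ s' t' : ℕ, s' ≤ n - 1 → 1 ≤ t' → t' ≤ n - 1 →
      V (s', t') = V (s', t' - 1)
        + (if (y.symm ((t' : ℕ) : ZMod n)).val ≤ s' then 1 else 0)
        - (if (x.symm ((t' : ℕ) : ZMod n)).val ≤ s' then 1 else 0) := by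
    intro s' t' h1 h2 h3
    have hTr := gd_T_row n x y D hcorner ((t' : ℕ) : ZMod n) s' h1
    have hcast : ((t' : ℕ) : ZMod n) - 1 = (((t' - 1 : ℕ)) : ZMod n) := by
      have h4 : ((t' - 1 : ℕ) : ZMod n) + 1 = (((t' - 1) + 1 : ℕ) : ZMod n) := by push_cast; ring
      rw [Nat.sub_add_cancel h2] at h4
      linear_combination -h4
    rw [hcast] at hTr
    rw [hV]
    dsimp only
    linarith [hTr]
  have hVrow0 : ∀ s' : ℕ, s' ≤ n - 1 →
      V (s', 0) = (if (y.symm ((0 : ℕ) : ZMod n)).val ≤ s' then 1 else 0)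
        - (if (x.symm ((0 : ℕ) : ZMod n)).val ≤ s' then 1 else 0) := by
    intro s' h1
    have hTr := gd_T_row n x y D hcorner ((0 : ℕ) : ZMod n) s' h1
    have hcast : ((0 : ℕ) : ZMod n) - 1 = (-1 : ZMod n) := by push_cast; ring
    rw [hcast] at hTr
    rw [hV]
    dsimp only
    linarith [hTr, hm0]
  have hVcol : ∀ s' t' : ℕ, 1 ≤ s' → s' ≤ n - 1 → t' ≤ n - 1 →
      V (s', t') = V (s' - 1, t')
        + (if (y ((s' : ℕ) : ZMod n)).val ≤ t' then 1 else 0)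
        - (if (x ((s' : ℕ) : ZMod n)).val ≤ t' then 1 else 0) := by
    intro s' t' h2 h1 h3
    have hTc := gd_T_col n x y D hcorner ((s' : ℕ) : ZMod n) t' h3
    have hcast : ((s' : ℕ) : ZMod n) - 1 = (((s' - 1 : ℕ)) : ZMod n) := by
      have h4 : ((s' - 1 : ℕ) : ZMod n) + 1 = (((s' - 1) + 1 : ℕ) : ZMod n) := by push_cast; ring
      rw [Nat.sub_add_cancel h2] at h4
      linear_combination -h4
    rw [hcast] at hTc
    rw [hV]
    dsimp only
    linarith [hTc]
  have hVcol0 : ∀ t' : ℕ, t' ≤ n - 1 →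
      V (0, t') = (if (y ((0 : ℕ) : ZMod n)).val ≤ t' then 1 else 0)
        - (if (x ((0 : ℕ) : ZMod n)).val ≤ t' then 1 else 0) := by
    intro t' h1
    have hTc := gd_T_col n x y D hcorner ((0 : ℕ) : ZMod n) t' h1
    have hcast : ((0 : ℕ) : ZMod n) - 1 = (-1 : ZMod n) := by push_cast; ring
    rw [hcast] at hTc
    rw [hV]
    dsimp only
    linarith [hTc, hm0]
  -- launch in the row direction
  have hsyt : (y.symm ((t : ℕ) : ZMod n)).val ≤ s := by
    rcases Nat.eq_zero_or_pos t with h0 | h1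
    · subst h0
      have h2 := hVrow0 s (by omega)
      rw [hpM] at h2
      split_ifs at h2 <;> omega
    · have hr := hVrow s t (by omega) h1 (by omega)
      have hle : V (s, t - 1) ≤ M := hMle _ (hmemF _ _ hsn (by omega))
      have hne2 : V (s, t - 1) ≠ M := by
        intro h
        have h3 : (s, t - 1) ∈ T := Finset.mem_filter.2 ⟨hmemF _ _ hsn (by omega), h⟩
        have h4 := hpmin _ h3
        dsimp at h4
        omega
      rw [hpM] at hr
      split_ifs at hr <;> omega
  -- launch in the column direction
  have htys : (y ((s : ℕ) : ZMod n)).val ≤ t := by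
    rcases Nat.eq_zero_or_pos s with h0 | h1
    · subst h0
      have h2 := hVcol0 t (by omega)
      rw [hpM] at h2
      split_ifs at h2 <;> omega
    · have hr := hVcol s t h1 (by omega) (by omega)
      have hle : V (s - 1, t) ≤ M := hMle _ (hmemF _ _ (by omega) htn)
      have hne2 : V (s - 1, t) ≠ M := by
        intro h
        have h3 : (s - 1, t) ∈ T := Finset.mem_filter.2 ⟨hmemF _ _ (by omega) htn, h⟩
        have h4 := hpmin _ h3
        dsimp at h4
        omega
      rw [hpM] at hr
      split_ifs at hr <;> omega
  -- upward chain
  have chainA : ∀ k : ℕ, t + k ≤ n - 1 →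
      (∀ t', t ≤ t' → t' < t + k → 0 < D (-1) ((t' : ℕ) : ZMod n)) →
      V (s, t + k) = M ∧ (y.symm (((t + k : ℕ)) : ZMod n)).val ≤ s := by
    intro k
    induction k with
    | zero => exact fun _ _ => ⟨hpM, hsyt⟩
    | succ k ih =>
      intro hk hall
      obtain ⟨hVk, hsyk⟩ := ih (by omega) (fun t' a b => hall t' a (by omega))
      have hA := A0 (t + k) (by omega) (hall (t + k) (by omega) (by omega))
      have hsy1 : (y.symm (((t + k + 1 : ℕ)) : ZMod n)).val ≤ s := by omega
      have hr := hVrow s (t + k + 1) (by omega) (by omega) (by omega)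
      have hle : V (s, t + k + 1) ≤ M := hMle _ (hmemF _ _ hsn (by omega))
      have hsub : t + k + 1 - 1 = t + k := by omega
      rw [hsub] at hr
      constructor
      · show V (s, t + k + 1) = M
        rw [hVk] at hr
        split_ifs at hr <;> omega
      · exact hsy1
  -- find the first zero of the cut column above t
  have hexA : ∃ t', t ≤ t' ∧ t' ≤ n - 1 ∧ D (-1) ((t' : ℕ) : ZMod n) ≤ 0 :=
    ⟨n - 1, by omega, le_rfl, by rw [gd_cast_pred, hm0]⟩
  obtain ⟨t2, ⟨ht2a, ht2b, ht2c⟩, ht2min⟩ :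
      ∃ t2, (t ≤ t2 ∧ t2 ≤ n - 1 ∧ D (-1) ((t2 : ℕ) : ZMod n) ≤ 0) ∧
        ∀ t' < t2, ¬(t ≤ t' ∧ t' ≤ n - 1 ∧ D (-1) ((t' : ℕ) : ZMod n) ≤ 0) :=
    ⟨Nat.find hexA, Nat.find_spec hexA, fun t' h => Nat.find_min hexA h⟩
  have ht2pos : ∀ t', t ≤ t' → t' < t2 → 0 < D (-1) ((t' : ℕ) : ZMod n) := by
    intro t' h1 h2
    have h3 := ht2min t' h2
    by_contra h4
    exact h3 ⟨h1, by omega, by omega⟩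
  have hchA := chainA (t2 - t) (by omega) (fun t' a b => ht2pos t' a (by omega))
  rw [Nat.add_sub_cancel' ht2a] at hchA
  obtain ⟨hVt2, hsyt2⟩ := hchA
  have ht2ne : t2 ≠ n - 1 := by
    intro h
    rw [h, hVtop] at hVt2
    omega
  have hDt2 : D (-1) ((t2 : ℕ) : ZMod n) = 0 := le_antisymm ht2c (hpos _ _)
  have hBs : M ≤ D ((s : ℕ) : ZMod n) (-1) := by
    rw [hV] at hVt2
    dsimp only at hVt2
    have := hpos ((s : ℕ) : ZMod n) ((t2 : ℕ) : ZMod n)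
    omega
  -- sideways chain at height t2
  have chainB : ∀ k : ℕ, s + k ≤ n - 1 →
      (∀ s', s ≤ s' → s' < s + k → 0 < D ((s' : ℕ) : ZMod n) (-1)) →
      V (s + k, t2) = M ∧ (y (((s + k : ℕ)) : ZMod n)).val ≤ t2 := by
    intro k
    induction k with
    | zero => exact fun _ _ => ⟨hVt2, le_trans htys ht2a⟩
    | succ k ih =>
      intro hk hall
      obtain ⟨hVk, htyk⟩ := ih (by omega) (fun s' a b => hall s' a (by omega))
      have hB := B0 (s + k) (by omega) (hall (s + k) (by omega) (by omega))
      have hty1 : (y (((s + k + 1 : ℕ)) : ZMod n)).val ≤ t2 := by omega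
      have hr := hVcol (s + k + 1) t2 (by omega) (by omega) (by omega)
      have hle : V (s + k + 1, t2) ≤ M := hMle _ (hmemF _ _ (by omega) (by omega))
      have hsub : s + k + 1 - 1 = s + k := by omega
      rw [hsub] at hr
      constructor
      · show V (s + k + 1, t2) = M
        rw [hVk] at hr
        split_ifs at hr <;> omega
      · exact hty1
  have hexB : ∃ s', s ≤ s' ∧ s' ≤ n - 1 ∧ D ((s' : ℕ) : ZMod n) (-1) ≤ 0 :=
    ⟨n - 1, by omega, le_rfl, by rw [gd_cast_pred, hm0]⟩
  obtain ⟨s2, ⟨hs2a, hs2b, hs2c⟩, hs2min⟩ :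
      ∃ s2, (s ≤ s2 ∧ s2 ≤ n - 1 ∧ D ((s2 : ℕ) : ZMod n) (-1) ≤ 0) ∧
        ∀ s' < s2, ¬(s ≤ s' ∧ s' ≤ n - 1 ∧ D ((s' : ℕ) : ZMod n) (-1) ≤ 0) :=
    ⟨Nat.find hexB, Nat.find_spec hexB, fun s' h => Nat.find_min hexB h⟩
  have hs2pos : ∀ s', s ≤ s' → s' < s2 → 0 < D ((s' : ℕ) : ZMod n) (-1) := by
    intro s' h1 h2
    have h3 := hs2min s' h2
    by_contra h4
    exact h3 ⟨h1, by omega, by omega⟩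
  have hchB := chainB (s2 - s) (by omega) (fun s' a b => hs2pos s' a (by omega))
  rw [Nat.add_sub_cancel' hs2a] at hchB
  obtain ⟨hVs2, -⟩ := hchB
  have hs2ne : s2 ≠ n - 1 := by
    intro h
    rw [h, hVright] at hVs2
    omega
  have hDs2 : D ((s2 : ℕ) : ZMod n) (-1) = 0 := le_antisymm hs2c (hpos _ _)
  -- final contradiction
  rw [hV] at hVs2
  dsimp only at hVs2
  have := hpos ((s2 : ℕ) : ZMod n) ((t2 : ℕ) : ZMod n)
  omega
/-- Lemma 3.5: if `(a, b, y)` is neither A-plausible nor B-plausible and `D ∈ 𝒟⁺(x, y)`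
has `A(D) = a` and `B(D) = b`, then `y ≼ x`. -/
theorem le_of_not_plausible (n : ℕ) (hn : 1 ≤ n)
    (x y : Equiv.Perm (ZMod n))
    (a : {j : ZMod n // j ≠ (n : ZMod n) - 1} → ℕ)
    (b : {i : ZMod n // i ≠ (n : ZMod n) - 1} → ℕ)
    (hnA : ¬ APlausible n a y) (hnB : ¬ BPlausible n b y)
    (D : ZMod n → ZMod n → ℤ) (hD : IsGridPosDomain n x y D)
    (hAeq : ∀ j, colA n D j = (a j : ℤ)) (hBeq : ∀ i, rowB n D i = (b i : ℤ)) :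
    gridLE n y x := by
  haveI : NeZero n := ⟨by omega⟩
  classical
  have hm : ((n : ZMod n) - 1) = (-1 : ZMod n) := gd_m_eq n
  obtain ⟨⟨hmm, hcorner⟩, hpos⟩ := hD
  rw [hm] at hmm
  -- positivity of the reduced domain
  have hEpos : ∀ i j : ZMod n, D (-1) j + D i (-1) ≤ D i j := by
    rcases eq_or_lt_of_le hn with h1 | h2
    · -- n = 1 : everything is the corner square
      intro i j
      have hsub : Subsingleton (ZMod n) := by
        rw [← h1]
        infer_instance
      have e1 : i = -1 := Subsingleton.elim _ _
      have e2 : j = -1 := Subsingleton.elim _ _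
      rw [e1, e2, hmm]
      norm_num
    · have hn2 : 2 ≤ n := h2
      -- no ascents along the cut column
      have A0 : ∀ t : ℕ, t + 1 ≤ n - 1 → 0 < D (-1) ((t : ℕ) : ZMod n) →
          (y.symm (((t + 1 : ℕ)) : ZMod n)).val < (y.symm ((t : ℕ) : ZMod n)).val := by
        intro t ht hDt
        by_contra hc
        push_neg at hc
        have hvt : (((t : ℕ)) : ZMod n).val = t := ZMod.val_cast_of_lt (by omega)
        have hvt1 : (((t + 1 : ℕ)) : ZMod n).val = t + 1 := ZMod.val_cast_of_lt (by omega)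
        have hnecast : ((t : ℕ) : ZMod n) ≠ (((t + 1 : ℕ)) : ZMod n) := by
          intro h
          rw [h, hvt1] at hvt
          omega
        have hlt : (y.symm ((t : ℕ) : ZMod n)).val < (y.symm (((t + 1 : ℕ)) : ZMod n)).val := by
          rcases lt_or_eq_of_le hc with h | h
          · exact h
          · exact absurd (y.symm.injective (gd_val_inj h)) hnecast
        obtain ⟨z, R, hrect, hRm⟩ := gd_exists_rect_A n hn2 y t ht hlt
        have htm : ((t : ℕ) : ZMod n) ≠ (n : ZMod n) - 1 := by
          rw [hm]
          intro h
          rw [h, gd_val_neg_one] at hvt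
          omega
        apply hnA
        refine ⟨z, R, hrect, ?_, ?_⟩
        · intro h0
          have h1 : colA n R ⟨((t : ℕ) : ZMod n), htm⟩ = 0 := by rw [h0]; rfl
          have h3 : colA n R ⟨((t : ℕ) : ZMod n), htm⟩ = 1 := by
            show R ((n : ZMod n) - 1) ((t : ℕ) : ZMod n) = 1
            rw [hm, hRm, if_pos rfl]
          rw [h3] at h1
          exact one_ne_zero h1
        · intro j
          obtain ⟨jv, hjv⟩ := j
          set av := a ⟨jv, hjv⟩ with hav
          have h2 : colA n D ⟨jv, hjv⟩ = (av : ℤ) := hAeq _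
          have h2' : D (-1) jv = (av : ℤ) := by
            rw [← h2]
            show D (-1) jv = D ((n : ZMod n) - 1) jv
            rw [hm]
          show R ((n : ZMod n) - 1) jv ≤ (av : ℤ)
          rw [hm, hRm]
          by_cases hj : jv = ((t : ℕ) : ZMod n)
          · rw [if_pos hj]
            rw [hj] at h2'
            omega
          · rw [if_neg hj]
            exact Int.natCast_nonneg _
      -- no ascents along the cut row
      have B0 : ∀ s : ℕ, s + 1 ≤ n - 1 → 0 < D ((s : ℕ) : ZMod n) (-1) →
          (y (((s + 1 : ℕ)) : ZMod n)).val < (y ((s : ℕ) : ZMod n)).val := by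
        intro s hs hDs
        by_contra hc
        push_neg at hc
        have hvs : (((s : ℕ)) : ZMod n).val = s := ZMod.val_cast_of_lt (by omega)
        have hvs1 : (((s + 1 : ℕ)) : ZMod n).val = s + 1 := ZMod.val_cast_of_lt (by omega)
        have hnecast : ((s : ℕ) : ZMod n) ≠ (((s + 1 : ℕ)) : ZMod n) := by
          intro h
          rw [h, hvs1] at hvs
          omega
        have hlt : (y ((s : ℕ) : ZMod n)).val < (y (((s + 1 : ℕ)) : ZMod n)).val := by
          rcases lt_or_eq_of_le hc with h | h
          · exact h
          · exact absurd (y.injective (gd_val_inj h)) hnecast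
        obtain ⟨z, R, hrect, hRm⟩ := gd_exists_rect_B n hn2 y s hs hlt
        have hsm : ((s : ℕ) : ZMod n) ≠ (n : ZMod n) - 1 := by
          rw [hm]
          intro h
          rw [h, gd_val_neg_one] at hvs
          omega
        apply hnB
        refine ⟨z, R, hrect, ?_, ?_⟩
        · intro h0
          have h1 : rowB n R ⟨((s : ℕ) : ZMod n), hsm⟩ = 0 := by rw [h0]; rfl
          have h3 : rowB n R ⟨((s : ℕ) : ZMod n), hsm⟩ = 1 := by
            show R ((s : ℕ) : ZMod n) ((n : ZMod n) - 1) = 1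
            rw [hm, hRm, if_pos rfl]
          rw [h3] at h1
          exact one_ne_zero h1
        · intro i
          obtain ⟨iv, hiv⟩ := i
          set bv := b ⟨iv, hiv⟩ with hbv
          have h2 : rowB n D ⟨iv, hiv⟩ = (bv : ℤ) := hBeq _
          have h2' : D iv (-1) = (bv : ℤ) := by
            rw [← h2]
            show D iv (-1) = D iv ((n : ZMod n) - 1)
            rw [hm]
          show R iv ((n : ZMod n) - 1) ≤ (bv : ℤ)
          rw [hm, hRm]
          by_cases hi : iv = ((s : ℕ) : ZMod n)
          · rw [if_pos hi]
            rw [hi] at h2'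
            omega
          · rw [if_neg hi]
            exact Int.natCast_nonneg _
      exact gd_key n hn2 x y D hcorner hmm hpos A0 B0
  refine ⟨fun i j => D i j - D (-1) j - D i (-1), ⟨⟨?_, ?_⟩, ?_⟩, ?_, ?_⟩
  · show D ((n : ZMod n) - 1) ((n : ZMod n) - 1) - D (-1) ((n : ZMod n) - 1)
        - D ((n : ZMod n) - 1) (-1) = 0
    rw [hm, hmm]
    ring
  · intro i j
    show (D i j - D (-1) j - D i (-1)) - (D (i - 1) j - D (-1) j - D (i - 1) (-1))
        - (D i (j - 1) - D (-1) (j - 1) - D i (-1))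
        + (D (i - 1) (j - 1) - D (-1) (j - 1) - D (i - 1) (-1)) = _
    linear_combination hcorner i j
  · intro i j
    show 0 ≤ D i j - D (-1) j - D i (-1)
    linarith [hEpos i j]
  · funext j
    obtain ⟨jv, hjv⟩ := j
    show D ((n : ZMod n) - 1) jv - D (-1) jv - D ((n : ZMod n) - 1) (-1) = 0
    rw [hm, hmm]
    ring
  · funext i
    obtain ⟨iv, hiv⟩ := i
    show D iv ((n : ZMod n) - 1) - D (-1) ((n : ZMod n) - 1) - D iv (-1) = 0
    rw [hm, hmm]
    ring
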